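/- Let k ≥ 2, ε > 0, and let G be a C_{2k-1}-free graph on n ≥ 4k/ε vertices with minimum degree at least (1/(2k-1) + ε)n. Then for every vertex v of G and every nonempty subset M of the neighbourhood N(v), the average degree of the induced subgraph G[M] is less than 2k, i.e., 2e(G[M])/|M| < 2k. -/

import Mathlib

open Finset SimpleGraph

namespace EGWork

variable {V : Type} [DecidableEq V] {G : SimpleGraph V} [DecidableRel G.Adj]

/-- number of `S`-neighbours of `x`. -/
def dS (G : SimpleGraph V) [DecidableRel G.Adj] (S : Finset V) (x : V) : ℕ :=
  (S.filter (G.Adj x)).card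

/-- sum of `S`-degrees over `S` (twice the number of edges inside `S`). -/
def DD (G : SimpleGraph V) [DecidableRel G.Adj] (S : Finset V) : ℕ :=
  ∑ x ∈ S, dS G S x

lemma DD_erase {S : Finset V} {x : V} (hx : x ∈ S) :
    DD G S = DD G (S.erase x) + 2 * dS G S x := by
  classical
  unfold DD
  rw [← Finset.add_sum_erase _ _ hx]
  have key : ∀ y ∈ S.erase x, dS G S y = dS G (S.erase x) y + (if G.Adj y x then 1 else 0) := by
    intro y hy
    unfold dS
    rw [Finset.filter_erase]
    by_cases hxy : G.Adj y x
    · have hxf : x ∈ S.filter (G.Adj y) := Finset.mem_filter.2 ⟨hx, hxy⟩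
      rw [if_pos hxy, Finset.card_erase_of_mem hxf]
      have h1 : 1 ≤ (S.filter (G.Adj y)).card := Finset.card_pos.2 ⟨x, hxf⟩
      omega
    · rw [if_neg hxy, Finset.erase_eq_of_notMem
        (fun hmem => hxy (Finset.mem_filter.1 hmem).2)]
      omega
  rw [Finset.sum_congr rfl key, Finset.sum_add_distrib]
  have hind : (∑ y ∈ S.erase x, if G.Adj y x then 1 else 0)
      = ((S.erase x).filter (fun y => G.Adj y x)).card := by
    rw [Finset.card_filter]
  have hset : (S.erase x).filter (fun y => G.Adj y x) = S.filter (G.Adj x) := by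
    ext y
    simp only [Finset.mem_filter, Finset.mem_erase]
    constructor
    · rintro ⟨⟨hyx, hyS⟩, hadj⟩
      exact ⟨hyS, hadj.symm⟩
    · rintro ⟨hyS, hadj⟩
      exact ⟨⟨hadj.ne', hyS⟩, hadj.symm⟩
  rw [hind, hset]
  unfold dS
  omega

lemma DD_split {S T : Finset V} (hTS : T ⊆ S)
    (hcl : ∀ a ∈ T, ∀ b ∈ S, G.Adj a b → b ∈ T) :
    DD G S = DD G T + DD G (S \ T) := by
  unfold DD
  rw [← Finset.sum_sdiff hTS, add_comm]
  congr 1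
  · apply Finset.sum_congr rfl
    intro a ha
    unfold dS
    congr 1
    ext b
    simp only [Finset.mem_filter]
    exact ⟨fun ⟨hbS, hadj⟩ => ⟨hcl a ha b hbS hadj, hadj⟩,
      fun ⟨hbT, hadj⟩ => ⟨hTS hbT, hadj⟩⟩
  · apply Finset.sum_congr rfl
    intro a ha
    rw [Finset.mem_sdiff] at ha
    unfold dS
    congr 1
    ext b
    simp only [Finset.mem_filter, Finset.mem_sdiff]
    constructor
    · rintro ⟨hbS, hadj⟩
      refine ⟨⟨hbS, fun hbT => ha.2 (hcl b hbT a ha.1 hadj.symm)⟩, hadj⟩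
    · rintro ⟨⟨hbS, _⟩, hadj⟩
      exact ⟨hbS, hadj⟩

lemma DD_le_clique (T : Finset V) : DD G T ≤ (T.card - 1) * T.card := by
  unfold DD
  calc ∑ x ∈ T, dS G T x ≤ ∑ _x ∈ T, (T.card - 1) := by
        apply Finset.sum_le_sum
        intro x hx
        unfold dS
        have hsub : T.filter (G.Adj x) ⊆ T.erase x := by
          intro b hb
          rw [Finset.mem_filter] at hb
          exact Finset.mem_erase.2 ⟨hb.2.ne', hb.1⟩
        calc (T.filter (G.Adj x)).card ≤ (T.erase x).card := Finset.card_le_card hsub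
          _ = T.card - 1 := Finset.card_erase_of_mem hx
    _ = (T.card - 1) * T.card := by rw [Finset.sum_const, smul_eq_mul, mul_comm]

lemma two_mul_edges [Fintype V] (S : Finset V) :
    2 * (G.edgeFinset.filter fun e => ∀ x ∈ e, x ∈ S).card = DD G S := by
  classical
  induction S using Finset.induction_on with
  | empty =>
    have hempty : (G.edgeFinset.filter fun e => ∀ x ∈ e, x ∈ (∅ : Finset V)) = ∅ := by
      rw [Finset.filter_eq_empty_iff]
      intro e he
      induction e with
      | h u w =>
        intro hall
        exact absurd (hall u (by simp)) (by simp)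
    rw [hempty]
    simp [DD]
  | @insert a S' ha ih =>
    set F : Finset (Sym2 V) := G.edgeFinset.filter (fun e => ∀ x ∈ e, x ∈ insert a S') with hF
    set F' : Finset (Sym2 V) := G.edgeFinset.filter (fun e => ∀ x ∈ e, x ∈ S') with hF'
    have hsub : F' ⊆ F := by
      rw [hF, hF']
      intro e he
      rw [Finset.mem_filter] at he ⊢
      exact ⟨he.1, fun x hxe => Finset.mem_insert_of_mem (he.2 x hxe)⟩
    have hdiff : F \ F' = (S'.filter (G.Adj a)).image (fun y => s(a, y)) := by
      ext e
      constructor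
      · intro he
        rw [Finset.mem_sdiff] at he
        obtain ⟨heF, heF'⟩ := he
        rw [hF, Finset.mem_filter] at heF
        obtain ⟨hee, hall⟩ := heF
        rw [Finset.mem_image]
        induction e with
        | h u w =>
          have hadj : G.Adj u w := by rwa [mem_edgeFinset, mem_edgeSet] at hee
          have hne : ¬ (∀ x ∈ s(u, w), x ∈ S') := by
            intro hco
            exact heF' (Finset.mem_filter.2 ⟨hee, hco⟩)
          have hu := hall u (by simp)
          have hw := hall w (by simp)
          rw [Finset.mem_insert] at hu hw
          by_cases huS : u ∈ S'
          · by_cases hwS : w ∈ S'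
            · exfalso
              apply hne
              intro x hx
              rw [Sym2.mem_iff] at hx
              rcases hx with rfl | rfl <;> assumption
            · have hwa : w = a := hw.resolve_right hwS
              subst hwa
              exact ⟨u, Finset.mem_filter.2 ⟨huS, hadj.symm⟩, Sym2.eq_swap⟩
          · have hua : u = a := hu.resolve_right huS
            subst hua
            have hwS : w ∈ S' := by
              rcases hw with rfl | hwS
              · exact absurd rfl hadj.ne
              · exact hwS
            exact ⟨w, Finset.mem_filter.2 ⟨hwS, hadj⟩, rfl⟩
      · intro he
        rw [Finset.mem_image] at he
        obtain ⟨y, hy, rfl⟩ := he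
        rw [Finset.mem_filter] at hy
        rw [Finset.mem_sdiff, hF, hF', Finset.mem_filter, Finset.mem_filter]
        refine ⟨⟨by rw [mem_edgeFinset, mem_edgeSet]; exact hy.2, ?_⟩, ?_⟩
        · intro x hx
          rw [Sym2.mem_iff] at hx
          rcases hx with rfl | rfl
          · exact Finset.mem_insert_self _ _
          · exact Finset.mem_insert_of_mem hy.1
        · rintro ⟨-, hall⟩
          exact ha (hall a (by simp))
    have hcards : F.card = F'.card + (S'.filter (G.Adj a)).card := by
      have h1 : (F \ F').card + F'.card = F.card := Finset.card_sdiff_add_card_eq_card hsub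
      have h2 : (F \ F').card = (S'.filter (G.Adj a)).card := by
        rw [hdiff]
        apply Finset.card_image_of_injOn
        intro y hy y' hy' heq
        rw [Sym2.congr_right] at heq
        exact heq
      omega
    have hDD : DD G (insert a S') = DD G S' + 2 * dS G S' a := by
      have := DD_erase (G := G) (S := insert a S') (x := a) (Finset.mem_insert_self a S')
      rw [Finset.erase_insert ha] at this
      rw [this]
      have : dS G (insert a S') a = dS G S' a := by
        unfold dS
        rw [Finset.filter_insert, if_neg (G.irrefl)]
      rw [this]
    rw [hDD, ← ih, hcards]
    unfold dS
    ring

lemma getVert_inj {x y : V} {p : G.Walk x y} (hp : p.IsPath) :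
    ∀ {i j : ℕ}, i ≤ p.length → j ≤ p.length → p.getVert i = p.getVert j → i = j := by
  induction p with
  | nil => intro i j hi hj _; simp only [Walk.length_nil, Nat.le_zero] at hi hj; omega
  | cons hadj q ih =>
    rename_i u w z
    intro i j hi hj heq
    rw [Walk.cons_isPath_iff] at hp
    match i, j with
    | 0, 0 => rfl
    | 0, j + 1 =>
      exfalso
      rw [Walk.getVert_zero, Walk.getVert_cons_succ] at heq
      exact hp.2 (Walk.mem_support_iff_exists_getVert.2
        ⟨j, heq.symm, by simpa using hj⟩)
    | i + 1, 0 =>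
      exfalso
      rw [Walk.getVert_zero, Walk.getVert_cons_succ] at heq
      exact hp.2 (Walk.mem_support_iff_exists_getVert.2
        ⟨i, heq, by simpa using hi⟩)
    | i + 1, j + 1 =>
      rw [Walk.getVert_cons_succ, Walk.getVert_cons_succ] at heq
      have := ih hp.1 (by simpa using hi) (by simpa using hj) heq
      omega

lemma exists_prefix {x y : V} (p : G.Walk x y) (hp : p.IsPath) {t : ℕ} (ht : t ≤ p.length) :
    ∃ (z : V) (q : G.Walk x z), q.IsPath ∧ q.length = t ∧ ∀ w ∈ q.support, w ∈ p.support := by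
  induction p generalizing t with
  | nil =>
    simp only [Walk.length_nil, Nat.le_zero] at ht
    subst ht
    refine ⟨_, Walk.nil, by simp, rfl, ?_⟩
    simp
  | cons hadj q ih =>
    rw [Walk.cons_isPath_iff] at hp
    match t with
    | 0 =>
      refine ⟨_, Walk.nil, by simp, rfl, ?_⟩
      simp
    | t + 1 =>
      obtain ⟨z', q', hq', hlen, hsub⟩ := ih hp.1 (by simpa using ht)
      refine ⟨z', Walk.cons hadj q', ?_, by simp [hlen], ?_⟩
      · rw [Walk.cons_isPath_iff]
        exact ⟨hq', fun hmem => hp.2 (hsub _ hmem)⟩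
      · intro v hv
        rw [Walk.support_cons] at hv ⊢
        rw [List.mem_cons] at hv
        rcases hv with rfl | hv
        · exact List.mem_cons_self
        · exact List.mem_cons_of_mem _ (hsub _ hv)

lemma exists_split {x y : V} (p : G.Walk x y) {i : ℕ} (hi : i < p.length) :
    ∃ (b a : V) (q : G.Walk x b) (r : G.Walk a y) (h : G.Adj b a),
      p = q.append (Walk.cons h r) ∧ q.length = i ∧ p.getVert i = b ∧ p.getVert (i + 1) = a := by
  induction p generalizing i with
  | nil => simp at hi
  | cons hadj q ih =>
    rename_i u w z
    match i with
    | 0 =>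
      refine ⟨u, w, Walk.nil, q, hadj, by simp, rfl, rfl, ?_⟩
      rw [Walk.getVert_cons_succ, Walk.getVert_zero]
    | i + 1 =>
      obtain ⟨b, a, q', r, h, heq, hlen, hb, ha⟩ := ih (by simpa using hi)
      refine ⟨b, a, Walk.cons hadj q', r, h, ?_, by simp [hlen], ?_, ?_⟩
      · rw [Walk.cons_append, heq]
      · rw [Walk.getVert_cons_succ]; exact hb
      · rw [Walk.getVert_cons_succ]; exact ha

lemma loop_length_zero {x : V} {q : G.Walk x x} (h : q.IsPath) : q.length = 0 := by
  have hq : (⟨q, h⟩ : G.Path x x) = SimpleGraph.Path.nil := SimpleGraph.Path.loop_eq _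
  have : q = Walk.nil := congrArg Subtype.val hq
  rw [this, Walk.length_nil]

/-- Rotation-extension: from a maximal-type configuration produce a longer path. -/
lemma grow (T : Finset V) {x y : V} (p : G.Walk x y) (hp : p.IsPath)
    (hsupp : ∀ z ∈ p.support, z ∈ T)
    {i : ℕ} (hi : i < p.length)
    (hA : G.Adj x (p.getVert (i + 1))) (hB : G.Adj y (p.getVert i))
    {u wv : V} (hu : u ∈ T) (hun : u ∉ p.support) (huw : G.Adj u wv) (hw : wv ∈ p.support) :
    ∃ (a b : V) (q : G.Walk a b), q.IsPath ∧ (∀ z ∈ q.support, z ∈ T) ∧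
      q.length = p.length + 1 := by
  classical
  by_cases hwx : wv = x
  · subst hwx
    refine ⟨u, y, Walk.cons huw p, (Walk.cons_isPath_iff _ _).2 ⟨hp, hun⟩, ?_, by simp⟩
    intro z hz
    rw [Walk.support_cons, List.mem_cons] at hz
    rcases hz with rfl | hz
    · exact hu
    · exact hsupp _ hz
  by_cases hwy : wv = y
  · subst hwy
    refine ⟨u, x, Walk.cons huw p.reverse, (Walk.cons_isPath_iff _ _).2
      ⟨hp.reverse, by rwa [Walk.support_reverse, List.mem_reverse]⟩, ?_, by simp⟩
    intro z hz
    rw [Walk.support_cons, List.mem_cons] at hz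
    rcases hz with rfl | hz
    · exact hu
    · exact hsupp _ (by rwa [Walk.support_reverse, List.mem_reverse] at hz)
  -- `wv` is an internal vertex of `p`
  have hge2 : 2 ≤ p.length := by
    obtain ⟨j, hjv, hjle⟩ := Walk.mem_support_iff_exists_getVert.1 hw
    have hj0 : j ≠ 0 := fun h => hwx (by rw [← hjv, h, Walk.getVert_zero])
    have hjL : j ≠ p.length := fun h => hwy (by rw [← hjv, h, Walk.getVert_length])
    omega
  obtain ⟨b, a, q, r, he, hpeq, hqlen, hbv, hav⟩ := exists_split p hi
  rw [hbv] at hB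
  rw [hav] at hA
  subst hpeq
  set P := q.append (Walk.cons he r) with hPdef
  have hsup : P.support = q.support ++ r.support := by
    rw [hPdef, Walk.support_append, Walk.support_cons, List.tail_cons]
  have hnd : (q.support ++ r.support).Nodup := by rw [← hsup]; exact hp.support_nodup
  obtain ⟨hndq, hndr, hdisj⟩ := List.nodup_append.1 hnd
  have hxr : x ∉ r.support := fun hmem => hdisj _ q.start_mem_support _ hmem rfl
  have hyq : y ∉ q.support := fun hmem => hdisj _ hmem _ r.end_mem_support rfl
  have hbq : b ∈ q.support := q.end_mem_support
  have har : a ∈ r.support := r.start_mem_support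
  -- the rotation cycle
  set c : G.Walk x x :=
    q.append (Walk.cons hB.symm (r.reverse.append (Walk.cons hA.symm Walk.nil))) with hcdef
  have hcsup : c.support = q.support ++ (r.reverse.support ++ [x]) := by
    rw [hcdef, Walk.support_append, Walk.support_cons, List.tail_cons, Walk.support_append,
      Walk.support_cons, Walk.support_nil, List.tail_cons]
  have hPlen : P.length = q.length + r.length + 1 := by
    rw [hPdef, Walk.length_append, Walk.length_cons]; omega
  have hclen : c.length = P.length + 1 := by
    rw [hcdef, Walk.length_append, Walk.length_cons, Walk.length_append, Walk.length_cons,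
      Walk.length_nil, Walk.length_reverse, hPlen]
    omega
  have hcsub : ∀ z ∈ c.support, z ∈ P.support := by
    intro z hz
    rw [hcsup, List.mem_append, List.mem_append] at hz
    rw [hsup, List.mem_append]
    rcases hz with hz | hz | hz
    · exact Or.inl hz
    · rw [Walk.support_reverse, List.mem_reverse] at hz
      exact Or.inr hz
    · rw [List.mem_singleton] at hz
      subst hz
      exact Or.inl q.start_mem_support
  have hPsubc : ∀ z ∈ P.support, z ∈ c.support := by
    intro z hz
    rw [hsup, List.mem_append] at hz
    rw [hcsup, List.mem_append, List.mem_append]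
    rcases hz with hz | hz
    · exact Or.inl hz
    · exact Or.inr (Or.inl (by rwa [Walk.support_reverse, List.mem_reverse]))
  -- c is a cycle
  have hedges : P.edges = q.edges ++ (s(b, a) :: r.edges) := by
    rw [hPdef, Walk.edges_append, Walk.edges_cons]
  have hend : (q.edges ++ (s(b, a) :: r.edges)).Nodup := by
    rw [← hedges]; exact hp.isTrail.edges_nodup
  obtain ⟨hqend, hconsnd, hedisj⟩ := List.nodup_append.1 hend
  have hrend : r.edges.Nodup := (List.nodup_cons.1 hconsnd).2
  have hcyc : c.IsCycle := by
    rw [Walk.isCycle_def]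
    refine ⟨⟨?_⟩, ?_, ?_⟩
    · -- trail
      have hce : c.edges = q.edges ++ (s(b, y) :: (r.reverse.edges ++ [s(a, x)])) := by
        rw [hcdef, Walk.edges_append, Walk.edges_cons, Walk.edges_append, Walk.edges_cons,
          Walk.edges_nil]
      rw [hce, List.nodup_append]
      refine ⟨hqend, ?_, ?_⟩
      · rw [List.nodup_cons, List.nodup_append]
        refine ⟨?_, by rw [Walk.edges_reverse, List.nodup_reverse]; exact hrend, List.nodup_singleton _, ?_⟩
        · -- s(b,y) not in r.reverse.edges ++ [s(a,x)]
          intro hmem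
          rw [List.mem_append, List.mem_singleton] at hmem
          rcases hmem with hmem | hmem
          · rw [Walk.edges_reverse, List.mem_reverse] at hmem
            exact hdisj _ hbq _ (r.fst_mem_support_of_mem_edges hmem) rfl
          · rw [Sym2.eq_iff] at hmem
            rcases hmem with ⟨rfl, rfl⟩ | ⟨rfl, rfl⟩
            · exact hdisj _ hbq _ har rfl
            · -- b = x and y = a : both segments are trivial, contradicting 2 ≤ P.length
              have hq0 : q.length = 0 := loop_length_zero (Walk.IsPath.mk' hndq)
              have hr0 : r.length = 0 := loop_length_zero (Walk.IsPath.mk' hndr)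
              omega
        · -- disjointness of r.reverse.edges and [s(a,x)]
          intro e hmem e' hmem' heq
          subst heq
          rw [List.mem_singleton] at hmem'
          subst hmem'
          rw [Walk.edges_reverse, List.mem_reverse] at hmem
          exact hxr (r.snd_mem_support_of_mem_edges hmem)
      · -- disjointness of q.edges and the rest
        intro e hmem e' hmem' heq
        subst heq
        rw [List.mem_cons, List.mem_append, List.mem_singleton] at hmem'
        rcases hmem' with rfl | hmem' | rfl
        · exact hyq (q.snd_mem_support_of_mem_edges hmem)
        · rw [Walk.edges_reverse, List.mem_reverse] at hmem'
          exact hedisj _ hmem _ (List.mem_cons_of_mem _ hmem') rfl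
        · exact hdisj _ (q.fst_mem_support_of_mem_edges hmem) _ har rfl
    · -- c ≠ nil
      intro hnil
      have : c.length = 0 := by rw [hnil, Walk.length_nil]
      omega
    · -- support tail nodup
      have htail : c.support.tail = q.support.tail ++ (r.reverse.support ++ [x]) := by
        rw [hcsup, List.tail_append_of_ne_nil (Walk.support_ne_nil q)]
      rw [htail, List.nodup_append]
      have hxq : x ∉ q.support.tail := by
        have := hndq
        rw [Walk.support_eq_cons q, List.nodup_cons] at this
        exact this.1
      refine ⟨?_, ?_, ?_⟩
      · have := hndq
        rw [Walk.support_eq_cons q, List.nodup_cons] at this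
        exact this.2
      · rw [List.nodup_append]
        refine ⟨by rw [Walk.support_reverse, List.nodup_reverse]; exact hndr, List.nodup_singleton _, ?_⟩
        intro z hz z' hz' heq
        subst heq
        rw [List.mem_singleton] at hz'
        subst hz'
        rw [Walk.support_reverse, List.mem_reverse] at hz
        exact hxr hz
      · intro z hz z' hz' heq
        subst heq
        have hzq : z ∈ q.support := List.mem_of_mem_tail hz
        rw [List.mem_append, List.mem_singleton] at hz'
        rcases hz' with hz' | rfl
        · rw [Walk.support_reverse, List.mem_reverse] at hz'
          exact hdisj _ hzq _ hz' rfl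
        · exact hxq hz
  -- rotate the cycle to start at wv
  have hwc : wv ∈ c.support := hPsubc _ hw
  set r' := c.rotate wv hwc with hr'def
  have hr'cyc : r'.IsCycle := hcyc.rotate hwc
  have hroteq : r' = (c.dropUntil wv hwc).append (c.takeUntil wv hwc) := rfl
  have hrotlen : r'.length = c.length := by
    have hspec := congrArg Walk.length (c.take_spec hwc)
    rw [Walk.length_append] at hspec
    rw [hroteq, Walk.length_append]
    omega
  have hr'sub : ∀ z ∈ r'.support, z ∈ c.support := by
    intro z hz
    rw [hroteq, Walk.mem_support_append_iff] at hz
    rcases hz with hz | hz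
    · exact Walk.support_dropUntil_subset _ _ hz
    · exact Walk.support_takeUntil_subset _ _ hz
  have hr'nnil : ¬ r'.Nil := by
    rw [Walk.not_nil_iff_lt_length, hrotlen, hclen]
    omega
  obtain ⟨w2, hadj2, t, ht⟩ := Walk.not_nil_iff.1 hr'nnil
  have htpath : t.IsPath := by
    apply Walk.IsPath.mk'
    have := hr'cyc.support_nodup
    rw [ht, Walk.support_cons, List.tail_cons] at this
    exact this
  have htsub : ∀ z ∈ t.support, z ∈ c.support := by
    intro z hz
    apply hr'sub
    rw [ht, Walk.support_cons]
    exact List.mem_cons_of_mem _ hz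
  have hut : u ∉ t.support := fun hmem => hun (hcsub _ (htsub _ hmem))
  refine ⟨u, w2, Walk.cons huw t.reverse, ?_, ?_, ?_⟩
  · rw [Walk.cons_isPath_iff]
    exact ⟨htpath.reverse, by rwa [Walk.support_reverse, List.mem_reverse]⟩
  · intro z hz
    rw [Walk.support_cons, List.mem_cons] at hz
    rcases hz with rfl | hz
    · exact hu
    · rw [Walk.support_reverse, List.mem_reverse] at hz
      exact hsupp _ (hcsub _ (htsub _ hz))
  · have : r'.length = t.length + 1 := by rw [ht, Walk.length_cons]
    rw [Walk.length_cons, Walk.length_reverse]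
    omega

theorem EG [Fintype V] (m : ℕ) (S : Finset V)
    (h : ∀ (x y : V) (p : G.Walk x y), p.IsPath → (∀ z ∈ p.support, z ∈ S) → p.length ≤ m) :
    DD G S ≤ m * S.card := by
  classical
  revert h
  induction S using Finset.strongInduction with
  | _ S ih =>
    intro h
    by_cases hS : S = ∅
    · subst hS; simp [DD]
    by_cases hlow : ∃ x ∈ S, 2 * dS G S x ≤ m
    · -- remove a low-degree vertex
      obtain ⟨x, hxS, hxd⟩ := hlow
      have hsub : S.erase x ⊂ S := Finset.erase_ssubset hxS
      have hrec := ih _ hsub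
        (fun a b p hp hs => h a b p hp (fun z hz => Finset.mem_of_mem_erase (hs z hz)))
      have herase := DD_erase (G := G) hxS
      have hcard : S.card = (S.erase x).card + 1 := by
        rw [Finset.card_erase_of_mem hxS]
        have := Finset.card_pos.2 ⟨x, hxS⟩
        omega
      have : m * S.card = m * (S.erase x).card + m := by rw [hcard]; ring
      omega
    · push_neg at hlow
      obtain ⟨x0, hx0⟩ := Finset.nonempty_of_ne_empty hS
      set T := S.filter (fun z => ∃ w : G.Walk x0 z, ∀ t ∈ w.support, t ∈ S) with hTdef
      have hx0T : x0 ∈ T := Finset.mem_filter.2 ⟨hx0, ⟨Walk.nil, by simpa using hx0⟩⟩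
      have hTS : T ⊆ S := Finset.filter_subset _ _
      have hcl : ∀ a ∈ T, ∀ b ∈ S, G.Adj a b → b ∈ T := by
        intro a ha b hb hadj
        rw [hTdef, Finset.mem_filter] at ha ⊢
        obtain ⟨haS, wlk, hwlk⟩ := ha
        refine ⟨hb, wlk.concat hadj, ?_⟩
        intro t htm
        rw [Walk.support_concat, List.mem_append,
          List.mem_singleton] at htm
        rcases htm with htm | rfl
        · exact hwlk _ htm
        · exact hb
      have hdT : ∀ z ∈ T, dS G T z = dS G S z := by
        intro z hz
        unfold dS
        congr 1
        ext b
        simp only [Finset.mem_filter]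
        exact ⟨fun ⟨hb, hadj⟩ => ⟨hTS hb, hadj⟩, fun ⟨hb, hadj⟩ => ⟨hcl z hz b hb hadj, hadj⟩⟩
      by_cases hTsmall : T.card ≤ m + 1
      · -- split off the small component T
        have hTd : DD G T ≤ m * T.card :=
          le_trans (DD_le_clique T) (Nat.mul_le_mul_right _ (by omega))
        have hSdT : S \ T ⊂ S := by
          refine Finset.ssubset_iff_of_subset (Finset.sdiff_subset) |>.2 ⟨x0, hTS hx0T, ?_⟩
          rw [Finset.mem_sdiff]
          exact fun hc => hc.2 hx0T
        have hrec := ih _ hSdT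
          (fun a b p hp hs => h a b p hp (fun z hz => (Finset.mem_sdiff.1 (hs z hz)).1))
        have hsplit := DD_split hTS hcl
        have hcards : (S \ T).card + T.card = S.card := Finset.card_sdiff_add_card_eq_card hTS
        have hmul : m * T.card + m * (S \ T).card = m * S.card := by
          rw [← Nat.mul_add, ← hcards]
          ring
        omega
      · -- T is big: derive a contradiction via a too-long path
        exfalso
        push_neg at hTsmall
        set N := Fintype.card V with hN
        set Pp : ℕ → Prop := fun L => ∃ (a b : V) (p : G.Walk a b),
          p.IsPath ∧ (∀ z ∈ p.support, z ∈ T) ∧ p.length = L with hPp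
        have hP0 : Pp 0 := ⟨x0, x0, Walk.nil, by simp, by simpa using hx0T, rfl⟩
        have hPbound : ∀ L, Pp L → L ≤ N := by
          rintro L ⟨a, b, p, hp, -, rfl⟩
          exact le_of_lt hp.length_lt
        set L := Nat.findGreatest Pp N with hLdef
        have hPL : Pp L := Nat.findGreatest_spec (Nat.zero_le N) hP0
        have hmax : ∀ L', Pp L' → L' ≤ L := by
          intro L' hL'
          by_contra hcon
          push_neg at hcon
          exact Nat.findGreatest_is_greatest hcon (hPbound L' hL') hL'
        obtain ⟨xx, yy, p, hp, hpsupp, hplen⟩ := hPL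
        have hxxT : xx ∈ T := hpsupp _ p.start_mem_support
        have hyyT : yy ∈ T := hpsupp _ p.end_mem_support
        have hLm : L ≤ m := hplen ▸ h xx yy p hp (fun z hz => hTS (hpsupp z hz))
        -- all T-neighbours of the endpoints lie on p
        have hxnb : ∀ w ∈ T, G.Adj xx w → w ∈ p.support := by
          intro w hwT hadj
          by_contra hwns
          have hnew : Pp (L + 1) := by
            refine ⟨w, yy, Walk.cons hadj.symm p,
              (Walk.cons_isPath_iff _ _).2 ⟨hp, hwns⟩, ?_, by simp [hplen]⟩
            intro z hz
            rw [Walk.support_cons, List.mem_cons] at hz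
            rcases hz with rfl | hz
            · exact hwT
            · exact hpsupp _ hz
          exact absurd (hmax _ hnew) (by omega)
        have hynb : ∀ w ∈ T, G.Adj yy w → w ∈ p.support := by
          intro w hwT hadj
          by_contra hwns
          have hnew : Pp (L + 1) := by
            refine ⟨w, xx, Walk.cons hadj.symm p.reverse,
              (Walk.cons_isPath_iff _ _).2 ⟨hp.reverse, ?_⟩, ?_, by simp [hplen]⟩
            · rwa [Walk.support_reverse, List.mem_reverse]
            · intro z hz
              rw [Walk.support_cons, List.mem_cons] at hz
              rcases hz with rfl | hz
              · exact hwT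
              · exact hpsupp _ (by rwa [Walk.support_reverse, List.mem_reverse] at hz)
          exact absurd (hmax _ hnew) (by omega)
        -- index extraction
        set f : V → ℕ := fun w =>
          if hw : ∃ j, p.getVert j = w ∧ j ≤ p.length then Classical.choose hw else 0 with hf
        have hfspec : ∀ w ∈ p.support, p.getVert (f w) = w ∧ f w ≤ p.length := by
          intro w hw
          obtain ⟨j, hj1, hj2⟩ := Walk.mem_support_iff_exists_getVert.1 hw
          rw [hf]
          have hex : ∃ j, p.getVert j = w ∧ j ≤ p.length := ⟨j, hj1, hj2⟩
          simp only [dif_pos hex]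
          exact Classical.choose_spec hex
        set A := (Finset.range L).filter (fun i0 => G.Adj xx (p.getVert (i0 + 1))) with hA
        set B := (Finset.range L).filter (fun i0 => G.Adj yy (p.getVert i0)) with hB
        have hAcard : dS G S xx ≤ A.card := by
          rw [← hdT _ hxxT]
          apply Finset.card_le_card_of_injOn (fun w => f w - 1)
          · intro w hw
            rw [Finset.mem_coe, Finset.mem_filter] at hw
            obtain ⟨hwT, hadj⟩ := hw
            have hwsup := hxnb w hwT hadj
            obtain ⟨hget, hle⟩ := hfspec w hwsup
            have hf0 : f w ≠ 0 := by
              intro h0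
              rw [h0, Walk.getVert_zero] at hget
              exact hadj.ne hget
            rw [hA, Finset.mem_coe, Finset.mem_filter, Finset.mem_range]
            beta_reduce
            constructor
            · omega
            · have : f w - 1 + 1 = f w := by omega
              rw [this, hget]
              exact hadj
          · intro w hw w' hw' heq
            have heq' : f w - 1 = f w' - 1 := heq
            rw [Finset.mem_coe, Finset.mem_filter] at hw hw'
            have hwsup := hxnb w hw.1 hw.2
            have hwsup' := hxnb w' hw'.1 hw'.2
            obtain ⟨hget, hle⟩ := hfspec w hwsup
            obtain ⟨hget', hle'⟩ := hfspec w' hwsup'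
            have hf0 : f w ≠ 0 := by
              intro h0; rw [h0, Walk.getVert_zero] at hget; exact hw.2.ne hget
            have hf0' : f w' ≠ 0 := by
              intro h0; rw [h0, Walk.getVert_zero] at hget'; exact hw'.2.ne hget'
            have : f w = f w' := by omega
            rw [← hget, ← hget', this]
        have hBcard : dS G S yy ≤ B.card := by
          rw [← hdT _ hyyT]
          apply Finset.card_le_card_of_injOn f
          · intro w hw
            rw [Finset.mem_coe, Finset.mem_filter] at hw
            obtain ⟨hwT, hadj⟩ := hw
            have hwsup := hynb w hwT hadj
            obtain ⟨hget, hle⟩ := hfspec w hwsup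
            have hfL : f w ≠ p.length := by
              intro h0
              rw [h0, Walk.getVert_length] at hget
              exact hadj.ne hget
            rw [hB, Finset.mem_coe, Finset.mem_filter, Finset.mem_range]
            refine ⟨by omega, by rw [hget]; exact hadj⟩
          · intro w hw w' hw' heq
            rw [Finset.mem_coe, Finset.mem_filter] at hw hw'
            obtain ⟨hget, hle⟩ := hfspec w (hynb w hw.1 hw.2)
            obtain ⟨hget', hle'⟩ := hfspec w' (hynb w' hw'.1 hw'.2)
            rw [← hget, ← hget', heq]
        have hxd := hlow xx (hTS hxxT)
        have hyd := hlow yy (hTS hyyT)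
        have hAB : (A ∩ B).Nonempty := by
          rw [← Finset.card_pos]
          have hun : (A ∪ B).card ≤ L := by
            have : A ∪ B ⊆ Finset.range L := by
              apply Finset.union_subset <;> exact Finset.filter_subset _ _
            simpa using Finset.card_le_card this
          have := Finset.card_inter_add_card_union A B
          omega
        obtain ⟨i0, hi0⟩ := hAB
        rw [Finset.mem_inter, hA, hB, Finset.mem_filter, Finset.mem_filter,
          Finset.mem_range] at hi0
        obtain ⟨⟨hi0L, hAdj1⟩, -, hAdj2⟩ := hi0
        -- a vertex of T outside p
        have hout : (T \ p.support.toFinset).Nonempty := by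
          rw [Finset.sdiff_nonempty]
          intro hconT
          have h1 : T.card ≤ p.support.toFinset.card := Finset.card_le_card hconT
          have h2 : p.support.toFinset.card ≤ p.support.length := List.toFinset_card_le _
          rw [Walk.length_support, hplen] at h2
          omega
        obtain ⟨u0, hu0⟩ := hout
        rw [Finset.mem_sdiff, List.mem_toFinset] at hu0
        obtain ⟨hu0T, hu0np⟩ := hu0
        -- find an edge from outside p into p within T
        have hTreach : ∀ z ∈ T, ∃ w : G.Walk x0 z, ∀ t ∈ w.support, t ∈ T := by
          intro z hz
          rw [hTdef, Finset.mem_filter] at hz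
          obtain ⟨hzS, wlk, hwlk⟩ := hz
          refine ⟨wlk, fun t ht => ?_⟩
          rw [hTdef, Finset.mem_filter]
          exact ⟨hwlk t ht, ⟨wlk.takeUntil t ht,
            fun s hs => hwlk s (Walk.support_takeUntil_subset _ ht hs)⟩⟩
        obtain ⟨wu, hwu⟩ := hTreach u0 hu0T
        obtain ⟨wx, hwx⟩ := hTreach xx hxxT
        set W : G.Walk u0 xx := wu.reverse.append wx with hW
        have hWT : ∀ z ∈ W.support, z ∈ T := by
          intro z hz
          rw [hW, Walk.mem_support_append_iff] at hz
          rcases hz with hz | hz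
          · exact hwu _ (by rwa [Walk.support_reverse, List.mem_reverse] at hz)
          · exact hwx _ hz
        obtain ⟨d, hd, hdfst, hdsnd⟩ := W.exists_boundary_dart {z | z ∉ p.support}
          hu0np (fun hc => hc p.start_mem_support)
        simp only [Set.mem_setOf_eq, not_not] at hdfst hdsnd
        have hdT : d.fst ∈ T := hWT _ (Walk.dart_fst_mem_support_of_mem_darts _ hd)
        obtain ⟨a, b, qq, hqq, hqqsupp, hqqlen⟩ :=
          grow T p hp hpsupp (hplen ▸ hi0L) hAdj1 hAdj2 hdT hdfst d.adj hdsnd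
        have : Pp (L + 1) := ⟨a, b, qq, hqq, hqqsupp, by rw [hqqlen, hplen]⟩
        exact absurd (hmax _ this) (by omega)

end EGWork

/-- Let `k ≥ 2`, `ε > 0`, and let `G` be a `C_{2k-1}`-free graph on `n ≥ 4k/ε` vertices with
minimum degree at least `(1/(2k-1) + ε)n`.  Then for every vertex `v` and every nonempty
subset `M` of the neighbourhood `N(v)`, the average degree of `G[M]` is less than `2k`,
i.e. `2·e(G[M])/|M| < 2k`. -/
theorem neighbourhood_avg_degree_lt {V : Type} [Fintype V] [DecidableEq V]
    (G : SimpleGraph V) [DecidableRel G.Adj] (k : ℕ) (hk : 2 ≤ k) (ε : ℝ) (hε : 0 < ε)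
    (hn : (4 * k : ℝ) / ε ≤ Fintype.card V)
    (hfree : ¬ ∃ (v : V) (w : G.Walk v v), w.IsCycle ∧ w.length = 2*k-1)
    (hdeg : ∀ v : V, ((1 : ℝ) / (2*k - 1) + ε) * Fintype.card V ≤ G.degree v)
    (v : V) (M : Finset V) (hM : M.Nonempty) (hMv : M ⊆ G.neighborFinset v) :
    (2 * (G.edgeFinset.filter fun e => ∀ x ∈ e, x ∈ M).card : ℝ) / M.card < 2*k := by
  classical
  have hvnotM : v ∉ M := by
    intro hvM
    exact G.irrefl ((G.mem_neighborFinset v v).1 (hMv hvM))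
  have hpath : ∀ (x y : V) (p : G.Walk x y), p.IsPath → (∀ z ∈ p.support, z ∈ M) →
      p.length ≤ 2 * k - 4 := by
    intro x y p hp hsup
    by_contra hlong
    push_neg at hlong
    have ht : 2 * k - 3 ≤ p.length := by omega
    obtain ⟨z, q, hq, hqlen, hqsub⟩ := EGWork.exists_prefix p hp ht
    have hxM : x ∈ M := hsup _ p.start_mem_support
    have hzM : z ∈ M := hsup _ (hqsub _ q.end_mem_support)
    have hvx : G.Adj v x := (G.mem_neighborFinset v x).1 (hMv hxM)
    have hvz : G.Adj v z := (G.mem_neighborFinset v z).1 (hMv hzM)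
    have hvq : v ∉ q.support := fun hmem => hvnotM (hsup _ (hqsub _ hmem))
    have hxz : x ≠ z := by
      intro hcon
      subst hcon
      have := EGWork.loop_length_zero hq
      omega
    have hconc : (q.concat hvz.symm).IsPath := by
      apply Walk.IsPath.mk'
      rw [Walk.support_concat, List.nodup_append]
      refine ⟨hq.support_nodup, List.nodup_singleton _, ?_⟩
      intro t htq t' htv heq
      subst heq
      rw [List.mem_singleton] at htv
      subst htv
      exact hvq htq
    have hcyc : (Walk.cons hvx (q.concat hvz.symm)).IsCycle := by
      rw [Walk.cons_isCycle_iff]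
      refine ⟨hconc, ?_⟩
      rw [Walk.edges_concat, List.concat_eq_append, List.mem_append, List.mem_singleton]
      rintro (hmem | hmem)
      · exact hvq (q.fst_mem_support_of_mem_edges hmem)
      · rw [Sym2.eq_iff] at hmem
        rcases hmem with ⟨h1, h2⟩ | ⟨h1, h2⟩
        · exact hvnotM (h1 ▸ hzM)
        · exact hxz h2
    exact hfree ⟨v, _, hcyc, by rw [Walk.length_cons, Walk.length_concat, hqlen]; omega⟩
  have hEG := EGWork.EG (G := G) (2 * k - 4) M hpath
  have h2e := EGWork.two_mul_edges (G := G) M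
  set e := (G.edgeFinset.filter fun e => ∀ x ∈ e, x ∈ M).card with he
  have hnat : 2 * e ≤ (2 * k - 4) * M.card := by omega
  have hcpos : 0 < M.card := Finset.card_pos.2 hM
  have hlt : 2 * e < 2 * k * M.card := by
    have hstep : (2 * k - 4) * M.card < 2 * k * M.card := by
      have h4 : 2 * k - 4 < 2 * k := by omega
      exact Nat.mul_lt_mul_of_lt_of_le h4 le_rfl hcpos
    omega
  rw [div_lt_iff₀ (by exact_mod_cast hcpos)]
  calc (2 * (e : ℝ)) = ((2 * e : ℕ) : ℝ) := by push_cast; ring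
    _ < ((2 * k * M.card : ℕ) : ℝ) := by exact_mod_cast hlt
    _ = 2 * (k : ℝ) * M.card := by push_cast; ring
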